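/- Let k ≥ 0 be an integer and let G be a finite simple graph containing no clique of size k+2 (i.e., G is K_{k+2}-free). Then G is an interval graph if and only if G is a bar k-visibility graph. -/

import Mathlib

open scoped Classical

/-- Adjacency (before symmetrization) in the bar `k`-visibility representation
with bars `[l i, r i] × {y i}`: there is a vertical line of sight at abscissa `x`
between bars `i` and `j` crossing at most `k` intervening bars. -/
def barAdj (k : ℕ) {n : ℕ} (l r y : Fin n → ℝ) (i j : Fin n) : Prop :=
  ∃ x : ℝ, l i ≤ x ∧ x ≤ r i ∧ l j ≤ x ∧ x ≤ r j ∧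
    ({m : Fin n | min (y i) (y j) < y m ∧ y m < max (y i) (y j) ∧
        l m ≤ x ∧ x ≤ r m}.ncard ≤ k)

/-- The bar `k`-visibility graph of the representation `(l, r, y)`. -/
def barGraph (k : ℕ) {n : ℕ} (l r y : Fin n → ℝ) : SimpleGraph (Fin n) :=
  SimpleGraph.fromRel (barAdj k l r y)

/-- A graph is a bar `k`-visibility graph if it is isomorphic to the bar
`k`-visibility graph of some representation: finitely many nondegenerate bars
at pairwise distinct heights. -/
def IsBarKVisibilityGraph (k : ℕ) {V : Type*} (G : SimpleGraph V) : Prop :=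
  ∃ (n : ℕ) (l r y : Fin n → ℝ), (∀ i, l i < r i) ∧ Function.Injective y ∧
    Nonempty (G ≃g barGraph k l r y)

/-- `G` is an interval graph: each vertex can be assigned a nonempty closed real
interval so that distinct vertices are adjacent iff their intervals intersect. -/
def IsIntervalGraph {V : Type*} (G : SimpleGraph V) : Prop :=
  ∃ a b : V → ℝ, (∀ v, a v ≤ b v) ∧
    ∀ u v : V, u ≠ v →
      (G.Adj u v ↔ ((Set.Icc (a u) (b u)) ∩ (Set.Icc (a v) (b v))).Nonempty)

/- ### Auxiliary lemmas -/

lemma barAdj_symm' {k n : ℕ} {l r y : Fin n → ℝ} {i j : Fin n}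
    (h : barAdj k l r y j i) : barAdj k l r y i j := by
  obtain ⟨x, h1, h2, h3, h4, h5⟩ := h
  refine ⟨x, h3, h4, h1, h2, ?_⟩
  simpa only [min_comm (y j) (y i), max_comm (y j) (y i)] using h5

lemma barGraph_adj {k n : ℕ} {l r y : Fin n → ℝ} {i j : Fin n} :
    (barGraph k l r y).Adj i j ↔ i ≠ j ∧ barAdj k l r y i j := by
  constructor
  · rintro ⟨hne, h | h⟩
    · exact ⟨hne, h⟩
    · exact ⟨hne, barAdj_symm' h⟩
  · rintro ⟨hne, h⟩
    exact ⟨hne, Or.inl h⟩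

/-- From a finite set of size at least `m`, extract the `m` elements of lowest
`y`-value. -/
lemma exists_lowest {n : ℕ} (y : Fin n → ℝ) (hy : Function.Injective y) (m : ℕ) :
    ∀ S : Finset (Fin n), m ≤ S.card →
      ∃ T ⊆ S, T.card = m ∧ ∀ s ∈ S, s ∉ T → ∀ t ∈ T, y t < y s := by
  induction m with
  | zero => exact fun S _ => ⟨∅, Finset.empty_subset _, rfl, by simp⟩
  | succ m ih =>
    intro S hS
    obtain ⟨T, hTS, hTc, hT⟩ := ih S (Nat.le_of_succ_le hS)
    have hne : (S \ T).Nonempty := by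
      rw [← Finset.card_pos, Finset.card_sdiff_of_subset hTS]; omega
    obtain ⟨s0, hs0, hmin⟩ := Finset.exists_min_image (S \ T) y hne
    rw [Finset.mem_sdiff] at hs0
    refine ⟨insert s0 T, ?_, ?_, ?_⟩
    · exact Finset.insert_subset hs0.1 hTS
    · rw [Finset.card_insert_of_notMem hs0.2, hTc]
    · intro s hsS hsT t ht
      rcases Finset.mem_insert.mp ht with rfl | htT
      · have hsd : s ∈ S \ T := Finset.mem_sdiff.mpr
          ⟨hsS, fun h => hsT (Finset.mem_insert_of_mem h)⟩
        have hne2 : s ≠ t := fun h => hsT (h ▸ Finset.mem_insert_self t T)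
        exact lt_of_le_of_ne (hmin s hsd) (fun h => hne2 (hy h).symm)
      · exact hT s hsS (fun h => hsT (Finset.mem_insert_of_mem h)) t htT

lemma clique_card_lt {α : Type*} {G : SimpleGraph α} {N : ℕ} (h : G.CliqueFree N)
    {S : Finset α} (hS : G.IsClique ↑S) : S.card < N := by
  by_contra hc
  push_neg at hc
  obtain ⟨T, hTS, hTc⟩ := Finset.exists_subset_card_eq hc
  exact h T ⟨hS.subset (Finset.coe_subset.mpr hTS), hTc⟩

/-- If the bar graph is `K_{k+2}`-free, then every vertical line meets at most
`k+1` bars. -/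
lemma bars_at_point {k n : ℕ} (l r y : Fin n → ℝ) (hy : Function.Injective y)
    (hfree : (barGraph k l r y).CliqueFree (k + 2)) (x : ℝ) :
    (Finset.univ.filter (fun m : Fin n => l m ≤ x ∧ x ≤ r m)).card ≤ k + 1 := by
  set S := Finset.univ.filter (fun m : Fin n => l m ≤ x ∧ x ≤ r m) with hSdef
  by_contra hc
  push_neg at hc
  obtain ⟨T, hTS, hTc, hT⟩ := exists_lowest y hy (k + 2) S (by omega)
  refine hfree T ⟨?_, hTc⟩
  intro i hi j hj hij
  have hiS := hTS hi
  have hjS := hTS hj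
  rw [hSdef, Finset.mem_filter] at hiS hjS
  rw [barGraph_adj]
  refine ⟨hij, x, hiS.2.1, hiS.2.2, hjS.2.1, hjS.2.2, ?_⟩
  have hsub : {m : Fin n | min (y i) (y j) < y m ∧ y m < max (y i) (y j) ∧
      l m ≤ x ∧ x ≤ r m} ⊆ ↑((T.erase i).erase j) := by
    intro m hm
    obtain ⟨hm1, hm2, hm3, hm4⟩ := hm
    have hmS : m ∈ S := by rw [hSdef, Finset.mem_filter]; exact ⟨Finset.mem_univ m, hm3, hm4⟩
    have hmT : m ∈ T := by
      by_contra hmT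
      have h1 : y i < y m := hT m hmS hmT i hi
      have h2 : y j < y m := hT m hmS hmT j hj
      have : max (y i) (y j) ≤ y m := max_le h1.le h2.le
      exact absurd hm2 (not_lt.mpr this)
    have hmi : m ≠ i := by
      rintro rfl
      rcases min_lt_iff.mp hm1 with h | h
      · exact absurd h (lt_irrefl _)
      · rcases lt_max_iff.mp hm2 with h' | h'
        · exact absurd h' (lt_irrefl _)
        · exact absurd h (not_lt.mpr h'.le)
    have hmj : m ≠ j := by
      rintro rfl
      rcases min_lt_iff.mp hm1 with h | h
      · rcases lt_max_iff.mp hm2 with h' | h'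
        · exact absurd h (not_lt.mpr h'.le)
        · exact absurd h' (lt_irrefl _)
      · exact absurd h (lt_irrefl _)
    simp only [Finset.coe_erase, Set.mem_diff, Set.mem_singleton_iff]
    exact ⟨⟨hmT, hmi⟩, hmj⟩
  calc {m : Fin n | min (y i) (y j) < y m ∧ y m < max (y i) (y j) ∧
      l m ≤ x ∧ x ≤ r m}.ncard
      ≤ (↑((T.erase i).erase j) : Set (Fin n)).ncard :=
        Set.ncard_le_ncard hsub (Set.toFinite _)
    _ = ((T.erase i).erase j).card := Set.ncard_coe_finset _
    _ ≤ k := by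
        rw [Finset.card_erase_of_mem (Finset.mem_erase.mpr ⟨hij.symm, hj⟩),
          Finset.card_erase_of_mem hi, hTc]
        omega

/-- If the bar graph is `K_{k+2}`-free, it is exactly the intersection graph of
the bars' horizontal extents. -/
lemma barGraph_adj_iff {k n : ℕ} (l r y : Fin n → ℝ) (hy : Function.Injective y)
    (hfree : (barGraph k l r y).CliqueFree (k + 2)) {i j : Fin n} (hij : i ≠ j) :
    (barGraph k l r y).Adj i j ↔
      (Set.Icc (l i) (r i) ∩ Set.Icc (l j) (r j)).Nonempty := by
  rw [barGraph_adj]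
  constructor
  · rintro ⟨-, x, h1, h2, h3, h4, -⟩
    exact ⟨x, ⟨h1, h2⟩, ⟨h3, h4⟩⟩
  · rintro ⟨x, ⟨h1, h2⟩, ⟨h3, h4⟩⟩
    refine ⟨hij, x, h1, h2, h3, h4, ?_⟩
    set S := Finset.univ.filter (fun m : Fin n => l m ≤ x ∧ x ≤ r m) with hSdef
    have hiS : i ∈ S := by rw [hSdef, Finset.mem_filter]; exact ⟨Finset.mem_univ i, h1, h2⟩
    have hjS : j ∈ S := by rw [hSdef, Finset.mem_filter]; exact ⟨Finset.mem_univ j, h3, h4⟩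
    have hcard := bars_at_point l r y hy hfree x
    rw [← hSdef] at hcard
    have hsub : {m : Fin n | min (y i) (y j) < y m ∧ y m < max (y i) (y j) ∧
        l m ≤ x ∧ x ≤ r m} ⊆ ↑((S.erase i).erase j) := by
      intro m hm
      obtain ⟨hm1, hm2, hm3, hm4⟩ := hm
      have hmS : m ∈ S := by rw [hSdef, Finset.mem_filter]; exact ⟨Finset.mem_univ m, hm3, hm4⟩
      have hmi : m ≠ i := by
        rintro rfl
        rcases min_lt_iff.mp hm1 with h | h
        · exact absurd h (lt_irrefl _)
        · rcases lt_max_iff.mp hm2 with h' | h'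
          · exact absurd h' (lt_irrefl _)
          · exact absurd h (not_lt.mpr h'.le)
      have hmj : m ≠ j := by
        rintro rfl
        rcases min_lt_iff.mp hm1 with h | h
        · rcases lt_max_iff.mp hm2 with h' | h'
          · exact absurd h (not_lt.mpr h'.le)
          · exact absurd h' (lt_irrefl _)
        · exact absurd h (lt_irrefl _)
      simp only [Finset.coe_erase, Set.mem_diff, Set.mem_singleton_iff]
      exact ⟨⟨hmS, hmi⟩, hmj⟩
    calc {m : Fin n | min (y i) (y j) < y m ∧ y m < max (y i) (y j) ∧
        l m ≤ x ∧ x ≤ r m}.ncard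
        ≤ (↑((S.erase i).erase j) : Set (Fin n)).ncard :=
          Set.ncard_le_ncard hsub (Set.toFinite _)
      _ = ((S.erase i).erase j).card := Set.ncard_coe_finset _
      _ ≤ k := by
          rw [Finset.card_erase_of_mem (Finset.mem_erase.mpr ⟨hij.symm, hjS⟩),
            Finset.card_erase_of_mem hiS]
          omega

/-- A `K_{k+2}`-free finite simple graph is an interval graph if and only if it
is a bar `k`-visibility graph. -/
theorem intervalGraph_iff_bar_k_visibility (k : ℕ) {V : Type*} [Fintype V]
    (G : SimpleGraph V) (hfree : G.CliqueFree (k + 2)) :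
    IsIntervalGraph G ↔ IsBarKVisibilityGraph k G := by
  classical
  constructor
  · rintro ⟨a, b, hab, hadj⟩
    set n := Fintype.card V with hn
    set e := Fintype.equivFin V with he
    -- choose a small ε > 0 that does not change the intersection pattern
    set s : Finset ℝ := (Finset.univ.filter (fun p : V × V => b p.2 < a p.1)).image
      (fun p : V × V => a p.1 - b p.2) with hsdef
    set ε : ℝ := if h : s.Nonempty then min 1 (s.min' h) / 2 else 1 / 2 with hεdef
    have hspos : ∀ z ∈ s, 0 < z := by
      intro z hz
      rw [hsdef, Finset.mem_image] at hz
      obtain ⟨p, hp, rfl⟩ := hz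
      rw [Finset.mem_filter] at hp
      linarith [hp.2]
    have hε : 0 < ε := by
      rw [hεdef]
      split_ifs with h
      · have := hspos _ (s.min'_mem h)
        have h1 : (0:ℝ) < min 1 (s.min' h) := lt_min one_pos this
        linarith
      · norm_num
    have hkey : ∀ u v : V, a u ≤ b v + ε → a u ≤ b v := by
      intro u v h
      by_contra hc
      push_neg at hc
      have hmem : a u - b v ∈ s := by
        rw [hsdef, Finset.mem_image]
        exact ⟨(u, v), Finset.mem_filter.mpr ⟨Finset.mem_univ _, hc⟩, rfl⟩
      have hne : s.Nonempty := ⟨_, hmem⟩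
      have h1 : s.min' hne ≤ a u - b v := Finset.min'_le _ _ hmem
      have h2 : ε = min 1 (s.min' hne) / 2 := by rw [hεdef, dif_pos hne]
      have h3 : min 1 (s.min' hne) ≤ a u - b v := le_trans (min_le_right _ _) h1
      have h4 : 0 < min 1 (s.min' hne) := lt_min one_pos (hspos _ (s.min'_mem hne))
      have : ε < a u - b v := by rw [h2]; linarith
      linarith
    set l : Fin n → ℝ := fun i => a (e.symm i) with hl
    set r : Fin n → ℝ := fun i => b (e.symm i) + ε with hr
    set y : Fin n → ℝ := fun i => (i : ℕ) with hyd
    have hyinj : Function.Injective y := by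
      intro i j h
      exact Fin.ext (Nat.cast_injective h)
    have hlr : ∀ i, l i < r i := fun i => by
      have := hab (e.symm i); simp only [hl, hr]; linarith
    -- the thickened intervals intersect iff the original ones do
    have hIcc : ∀ u v : V,
        (Set.Icc (a u) (b u + ε) ∩ Set.Icc (a v) (b v + ε)).Nonempty ↔
        (Set.Icc (a u) (b u) ∩ Set.Icc (a v) (b v)).Nonempty := by
      intro u v
      constructor
      · rintro ⟨x, ⟨h1, h2⟩, ⟨h3, h4⟩⟩
        have hub := hkey u v (le_trans h1 h4)
        have hvu := hkey v u (le_trans h3 h2)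
        exact ⟨max (a u) (a v), ⟨le_max_left _ _, max_le (hab u) hvu⟩,
          ⟨le_max_right _ _, max_le hub (hab v)⟩⟩
      · rintro ⟨x, ⟨h1, h2⟩, ⟨h3, h4⟩⟩
        exact ⟨x, ⟨h1, by linarith⟩, ⟨h3, by linarith⟩⟩
    have hsub : ∀ i j : Fin n, (barGraph k l r y).Adj i j →
        G.Adj (e.symm i) (e.symm j) := by
      intro i j h
      rw [barGraph_adj] at h
      obtain ⟨hne, x, h1, h2, h3, h4, -⟩ := h
      have hne' : e.symm i ≠ e.symm j := fun h => hne (e.symm.injective h)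
      rw [hadj _ _ hne']
      exact (hIcc _ _).mp ⟨x, ⟨h1, h2⟩, ⟨h3, h4⟩⟩
    have hcf : (barGraph k l r y).CliqueFree (k + 2) := by
      intro T hT
      refine hfree (T.image e.symm) ⟨?_, ?_⟩
      · intro u hu v hv huv
        simp only [Finset.coe_image, Set.mem_image, Finset.mem_coe] at hu hv
        obtain ⟨i, hi, rfl⟩ := hu
        obtain ⟨j, hj, rfl⟩ := hv
        have hij : i ≠ j := fun h => huv (by rw [h])
        exact hsub i j (hT.1 hi hj hij)
      · rw [Finset.card_image_of_injective _ e.symm.injective, hT.2]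
    refine ⟨n, l, r, y, hlr, hyinj, ⟨⟨e, ?_⟩⟩⟩
    intro u v
    by_cases huv : u = v
    · subst huv
      simp [SimpleGraph.irrefl]
    · have heuv : e u ≠ e v := fun h => huv (e.injective h)
      rw [barGraph_adj_iff l r y hyinj hcf heuv, hadj u v huv]
      simp only [hl, hr, Equiv.symm_apply_apply]
      exact hIcc u v
  · rintro ⟨n, l, r, y, hlr, hy, ⟨e⟩⟩
    have hcf : (barGraph k l r y).CliqueFree (k + 2) :=
      hfree.comap e.symm.toEmbedding.isContained
    refine ⟨fun v => l (e v), fun v => r (e v), fun v => (hlr (e v)).le,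
      fun u v huv => ?_⟩
    have heuv : e u ≠ e v := fun h => huv (e.injective h)
    rw [← e.map_rel_iff]
    exact barGraph_adj_iff l r y hy hcf heuv
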